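/- Let G : ℝ → (0,∞) satisfy G(x) = O(⟨x⟩^{-m}) with m > 3. Then for every k in the closed upper half-plane with k ≠ 0 (and also k = 0), the operator b(k) on L²(ℝ) with integral kernel G(x)^{1/2} · (1 − e^{ik|x−y|})/(2ik) · G(y)^{1/2} is Hilbert–Schmidt, and the map k ↦ b(k) is continuous on {k : Im(k) ≥ 0} with values in the Hilbert–Schmidt class, where b(0) has kernel G(x)^{1/2} (−|x−y|/2) G(y)^{1/2}. -/

import Mathlib

open MeasureTheory Complex
open scoped ENNReal NNReal

/-- The integral kernel of `b(k)`: for `k ≠ 0` it is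
`√G(x) · (1 − e^{ik|x−y|})/(2ik) · √G(y)`, and for `k = 0` it is `√G(x)·(−|x−y|/2)·√G(y)`. -/
noncomputable def bKernel (G : ℝ → ℝ) (k : ℂ) (p : ℝ × ℝ) : ℂ :=
  if k = 0 then
    (Real.sqrt (G p.1) : ℂ) * (-(|p.1 - p.2| : ℝ) / 2) * (Real.sqrt (G p.2) : ℂ)
  else
    (Real.sqrt (G p.1) : ℂ) *
      ((1 - Complex.exp (Complex.I * k * |p.1 - p.2|)) / (2 * Complex.I * k)) *
      (Real.sqrt (G p.2) : ℂ)

lemma norm_one_sub_exp_le {z : ℂ} (hz : z.re ≤ 0) : ‖1 - Complex.exp z‖ ≤ ‖z‖ := by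
  have hderiv : ∀ s ∈ Set.uIcc (0:ℝ) 1,
      HasDerivAt (fun u : ℝ => Complex.exp (u * z)) (Complex.exp (s * z) * z) s := by
    intro s _
    simpa using (((hasDerivAt_id (s:ℂ)).mul_const z).cexp).comp_ofReal
  have hint : IntervalIntegrable (fun s : ℝ => Complex.exp (s * z) * z) volume 0 1 :=
    (Continuous.intervalIntegrable (by continuity) 0 1)
  have key : ∫ s in (0:ℝ)..1, Complex.exp (s * z) * z
      = Complex.exp ((1:ℝ) * z) - Complex.exp ((0:ℝ) * z) :=
    intervalIntegral.integral_eq_sub_of_hasDerivAt hderiv hint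
  have key2 : Complex.exp z - 1 = ∫ s in (0:ℝ)..1, Complex.exp (s * z) * z := by
    rw [key]; simp
  have hbd : ‖∫ s in (0:ℝ)..1, Complex.exp (s * z) * z‖ ≤ ‖z‖ * |1 - 0| := by
    apply intervalIntegral.norm_integral_le_of_norm_le_const
    intro s hs
    rw [Set.uIoc_of_le (by norm_num : (0:ℝ) ≤ 1)] at hs
    rw [norm_mul, Complex.norm_exp]
    have : (↑s * z).re = s * z.re := by simp
    have h1 : Real.exp ((↑s * z).re) ≤ 1 := by
      rw [this, Real.exp_le_one_iff]
      exact mul_nonpos_of_nonneg_of_nonpos hs.1.le hz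
    nlinarith [norm_nonneg z, Real.exp_pos ((↑s * z).re)]
  calc ‖1 - Complex.exp z‖ = ‖Complex.exp z - 1‖ := by rw [norm_sub_rev]
    _ = ‖∫ s in (0:ℝ)..1, Complex.exp (s * z) * z‖ := by rw [key2]
    _ ≤ ‖z‖ * |1 - 0| := hbd
    _ = ‖z‖ := by norm_num


noncomputable def hAux (k : ℂ) (t : ℝ) : ℂ :=
  if k = 0 then (-(t:ℂ)/2) else (1 - Complex.exp (Complex.I * k * t)) / (2 * Complex.I * k)

lemma hAux_norm_le {k : ℂ} (hk : 0 ≤ k.im) {t : ℝ} (ht : 0 ≤ t) : ‖hAux k t‖ ≤ t/2 := by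
  unfold hAux
  split_ifs with h
  · rw [norm_div, norm_neg]
    simp only [Complex.norm_real, Real.norm_eq_abs, Complex.norm_ofNat]
    rw [_root_.abs_of_nonneg ht]
  · have hre : (Complex.I * k * t).re ≤ 0 := by
      simp [Complex.mul_re, Complex.mul_im]
      nlinarith
    have h1 : ‖1 - Complex.exp (Complex.I * k * t)‖ ≤ ‖k‖ * t := by
      have h2 := norm_one_sub_exp_le hre
      have h3 : ‖Complex.I * k * (t:ℂ)‖ = ‖k‖ * t := by
        rw [norm_mul, norm_mul]
        simp only [Complex.norm_I, one_mul, Complex.norm_real, Real.norm_eq_abs]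
        rw [_root_.abs_of_nonneg ht]
      rw [h3] at h2; exact h2
    have hk0 : ‖k‖ > 0 := by simpa [norm_pos_iff] using h
    rw [norm_div]
    have hden : ‖(2 : ℂ) * Complex.I * k‖ = 2 * ‖k‖ := by
      rw [norm_mul, norm_mul]; simp
    rw [hden, div_le_div_iff₀ (by positivity) (by norm_num)]
    calc ‖1 - Complex.exp (Complex.I * k * t)‖ * 2 ≤ (‖k‖ * t) * 2 := by nlinarith
      _ = t * (2 * ‖k‖) := by ring

lemma hAux_continuousAt (t : ℝ) (k : ℂ) : ContinuousAt (fun k => hAux k t) k := by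
  rcases eq_or_ne k 0 with rfl | hk
  · rcases eq_or_ne t 0 with rfl | ht0
    · have : (fun k => hAux k 0) = fun _ => 0 := by
        funext k
        unfold hAux
        split_ifs with h <;> simp
      rw [this]; exact continuousAt_const
    · rw [ContinuousAt]
      have hval : hAux 0 t = -(t:ℂ)/2 := by simp [hAux]
      rw [hval]
      rw [← nhdsNE_sup_pure (0:ℂ), Filter.tendsto_sup]
      constructor
      · have hslope : Filter.Tendsto (fun w : ℂ => (Complex.exp w - 1) / w) (nhdsWithin 0 {0}ᶜ)
            (nhds 1) := by
          have h := hasDerivAt_iff_tendsto_slope.mp (Complex.hasDerivAt_exp 0)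
          rw [Complex.exp_zero] at h
          exact h.congr (fun w => by simp [slope_def_field])
        have hmap : Filter.Tendsto (fun k : ℂ => Complex.I * k * t) (nhdsWithin 0 {0}ᶜ)
            (nhdsWithin 0 {0}ᶜ) := by
          rw [tendsto_nhdsWithin_iff]
          constructor
          · have hc : Continuous (fun k : ℂ => Complex.I * k * t) := by continuity
            have := hc.tendsto 0
            simp only [mul_zero, zero_mul] at this
            exact this.mono_left nhdsWithin_le_nhds
          · filter_upwards [self_mem_nhdsWithin] with x hx
            simp only [Set.mem_compl_iff, Set.mem_singleton_iff] at hx ⊢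
            intro hc
            have htc : (t:ℂ) ≠ 0 := by exact_mod_cast ht0
            simp [mul_eq_zero, Complex.I_ne_zero, htc] at hc
            exact hx hc
        have comp := hslope.comp hmap
        have heq : ∀ k : ℂ, k ≠ 0 → hAux k t
            = -(t:ℂ)/2 * ((Complex.exp (Complex.I * k * t) - 1) / (Complex.I * k * t)) := by
          intro k hk
          have htc : (t:ℂ) ≠ 0 := by exact_mod_cast ht0
          unfold hAux
          rw [if_neg hk]
          field_simp
          ring
        have hT : Filter.Tendsto (fun k : ℂ => hAux k t) (nhdsWithin 0 {0}ᶜ)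
            (nhds (-(t:ℂ)/2 * 1)) := by
          apply Filter.Tendsto.congr' _ (Filter.Tendsto.const_mul (-(t:ℂ)/2) comp)
          filter_upwards [self_mem_nhdsWithin] with k hk
          simp only [Set.mem_compl_iff, Set.mem_singleton_iff] at hk
          exact (heq k hk).symm
        simpa using hT
      · rw [Filter.tendsto_pure_left]
        intro s hs
        have : hAux 0 t = -(t:ℂ)/2 := by simp [hAux]
        rw [this]
        exact mem_of_mem_nhds hs
  · have hev : (fun k' => hAux k' t) =ᶠ[nhds k]
        (fun k' => (1 - Complex.exp (Complex.I * k' * t)) / (2 * Complex.I * k')) := by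
      filter_upwards [isOpen_compl_singleton.mem_nhds (by simpa using hk)] with k' hk'
      simp only [Set.mem_compl_iff, Set.mem_singleton_iff] at hk'
      simp [hAux, hk']
    have hg : ContinuousAt
        (fun k' : ℂ => (1 - Complex.exp (Complex.I * k' * t)) / (2 * Complex.I * k')) k := by
      apply ContinuousAt.div
      · fun_prop
      · fun_prop
      · simp [hk, Complex.I_ne_zero]
    exact hg.congr hev.symm




noncomputable def gfun (G : ℝ → ℝ) (p : ℝ × ℝ) : ℝ :=
  Real.sqrt (G p.1) * (|p.1 - p.2| / 2) * Real.sqrt (G p.2)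

lemma bKernel_eq (G : ℝ → ℝ) (k : ℂ) (p : ℝ × ℝ) :
    bKernel G k p = (Real.sqrt (G p.1) : ℂ) * hAux k |p.1 - p.2| * (Real.sqrt (G p.2) : ℂ) := by
  unfold bKernel hAux
  split_ifs with h <;> norm_num

lemma hAux_continuous_t (k : ℂ) : Continuous (fun t : ℝ => hAux k t) := by
  unfold hAux
  split_ifs with h
  · fun_prop
  · apply Continuous.div
    · fun_prop
    · fun_prop
    · intro t; simp [h, Complex.I_ne_zero]

lemma bKernel_measurable (G : ℝ → ℝ) (hGmeas : Measurable G) (k : ℂ) :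
    Measurable (bKernel G k) := by
  have h1 : Measurable fun p : ℝ × ℝ => (Real.sqrt (G p.1) : ℂ) :=
    Complex.measurable_ofReal.comp (Real.continuous_sqrt.measurable.comp
      (hGmeas.comp measurable_fst))
  have h2 : Measurable fun p : ℝ × ℝ => (Real.sqrt (G p.2) : ℂ) :=
    Complex.measurable_ofReal.comp (Real.continuous_sqrt.measurable.comp
      (hGmeas.comp measurable_snd))
  have h3 : Measurable fun p : ℝ × ℝ => hAux k |p.1 - p.2| :=
    ((hAux_continuous_t k).measurable).comp (by fun_prop)
  simp only [funext fun p => bKernel_eq G k p]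
  exact (h1.mul h3).mul h2

lemma gfun_measurable (G : ℝ → ℝ) (hGmeas : Measurable G) : Measurable (gfun G) := by
  unfold gfun; fun_prop

lemma norm_bKernel_le (G : ℝ → ℝ) {k : ℂ} (hk : 0 ≤ k.im) (p : ℝ × ℝ) :
    ‖bKernel G k p‖ ≤ gfun G p := by
  rw [bKernel_eq, norm_mul, norm_mul]
  have h1 : ‖(Real.sqrt (G p.1) : ℂ)‖ = Real.sqrt (G p.1) := by
    simp [Complex.norm_real, _root_.abs_of_nonneg (Real.sqrt_nonneg _)]
  have h2 : ‖(Real.sqrt (G p.2) : ℂ)‖ = Real.sqrt (G p.2) := by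
    simp [Complex.norm_real, _root_.abs_of_nonneg (Real.sqrt_nonneg _)]
  rw [h1, h2]
  unfold gfun
  have := hAux_norm_le hk (abs_nonneg (p.1 - p.2))
  gcongr

lemma sq_gfun_le (G : ℝ → ℝ) (hGpos : ∀ x, 0 < G x) {C m : ℝ} (hC : 0 < C)
    (hdecay : ∀ x : ℝ, G x ≤ C * (Real.sqrt (1 + x ^ 2)) ^ (-m)) (p : ℝ × ℝ) :
    gfun G p ^ 2 ≤ C^2/2 *
      ((1 + p.1^2) ^ (-(m-2)/2) * (1 + p.2^2) ^ (-(m-2)/2)) := by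
  obtain ⟨x, y⟩ := p
  have ha : (0:ℝ) < 1 + x^2 := by positivity
  have hb : (0:ℝ) < 1 + y^2 := by positivity
  have hg2 : gfun G (x, y) ^ 2 = G x * G y * (|x - y|^2 / 4) := by
    unfold gfun
    rw [mul_pow, mul_pow, Real.sq_sqrt (hGpos x).le, Real.sq_sqrt (hGpos y).le]
    ring
  have hsq : ∀ z : ℝ, 0 < z → Real.sqrt z ^ (-m) = z ^ (-m/2) := by
    intro z hz
    rw [Real.sqrt_eq_rpow, ← Real.rpow_mul hz.le]
    congr 1
    ring
  have hGx := (hdecay x).trans_eq (by rw [hsq _ ha])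
  have hGy := (hdecay y).trans_eq (by rw [hsq _ hb])
  have habs : |x - y|^2 ≤ 2 * ((1 + x^2) * (1 + y^2)) := by
    rw [_root_.sq_abs]
    nlinarith [sq_nonneg (x - y), sq_nonneg (x + y), sq_nonneg (x*y), sq_nonneg (x*y - 1),
      sq_nonneg (x*y + 1)]
  have hA : (0:ℝ) ≤ (1 + x^2) ^ (-m/2) := Real.rpow_nonneg ha.le _
  have hB : (0:ℝ) ≤ (1 + y^2) ^ (-m/2) := Real.rpow_nonneg hb.le _
  have hrw : ∀ z : ℝ, 0 < z → z ^ (-(m-2)/2) = z ^ (-m/2) * z := by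
    intro z hz
    rw [show (-(m-2)/2 : ℝ) = -m/2 + 1 by ring, Real.rpow_add hz, Real.rpow_one]
  rw [hg2, hrw _ ha, hrw _ hb]
  calc G x * G y * (|x - y|^2 / 4)
      ≤ (C * (1 + x^2) ^ (-m/2)) * (C * (1 + y^2) ^ (-m/2))
        * ((2 * ((1 + x^2) * (1 + y^2))) / 4) := by
        gcongr <;> first | exact (hGpos x).le | exact (hGpos y).le | positivity
    _ = C^2/2 * ((1 + x^2) ^ (-m/2) * (1 + x^2) * ((1 + y^2) ^ (-m/2) * (1 + y^2))) := by
        ring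







/-- if `G : ℝ → (0,∞)` satisfies `G(x) = O(⟨x⟩^{-m})` with `m > 3`, then for every
`k` in the closed upper half-plane the operator `b(k)` with the above kernel is Hilbert–Schmidt
(its kernel is in `L²(ℝ²)`), and `k ↦ b(k)` is continuous on `{Im k ≥ 0}` with values in the
Hilbert–Schmidt class (i.e. in `L²(ℝ²)`). -/
theorem stmt2 (G : ℝ → ℝ) (hGpos : ∀ x, 0 < G x) (hGmeas : Measurable G)
    (m : ℝ) (hm : 3 < m)
    (hGdecay : ∃ C : ℝ, 0 < C ∧ ∀ x : ℝ, G x ≤ C * (Real.sqrt (1 + x ^ 2)) ^ (-m)) :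
    (∀ k : ℂ, 0 ≤ k.im → MemLp (bKernel G k) 2 (volume : Measure (ℝ × ℝ))) ∧
    ∃ (F : ℂ → Lp ℂ 2 (volume : Measure (ℝ × ℝ))),
      (∀ k : ℂ, 0 ≤ k.im → (F k : ℝ × ℝ → ℂ) =ᵐ[volume] bKernel G k) ∧
      ContinuousOn F {k : ℂ | 0 ≤ k.im} := by
  obtain ⟨C, hC, hdecay⟩ := hGdecay
  -- integrability of the square of the dominating function
  have hf : Integrable (fun x : ℝ => (1 + x^2) ^ (-(m-2)/2)) volume := by
    have h1 : (1:ℝ) < m - 2 := by linarith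
    have := integrable_rpow_neg_one_add_norm_sq (E := ℝ) (μ := volume) (r := m - 2)
      (by simpa using h1)
    apply this.congr
    filter_upwards with x
    norm_num [Real.norm_eq_abs, sq_abs]
  have hprod : Integrable
      (fun p : ℝ × ℝ => C^2/2 * ((1 + p.1^2) ^ (-(m-2)/2) * (1 + p.2^2) ^ (-(m-2)/2)))
      volume := by
    rw [MeasureTheory.Measure.volume_eq_prod]
    exact (hf.mul_prod hf).const_mul _
  have hgsq : Integrable (fun p : ℝ × ℝ => gfun G p ^ 2) volume := by
    apply hprod.mono'
    · exact (((gfun_measurable G hGmeas).pow_const 2).aestronglyMeasurable)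
    · filter_upwards with p
      rw [Real.norm_eq_abs, _root_.abs_of_nonneg (sq_nonneg _)]
      exact sq_gfun_le G hGpos hC hdecay p
  have hgmem : MemLp (gfun G) 2 volume :=
    (memLp_two_iff_integrable_sq (gfun_measurable G hGmeas).aestronglyMeasurable).mpr hgsq
  have hmem : ∀ k : ℂ, 0 ≤ k.im → MemLp (bKernel G k) 2 (volume : Measure (ℝ × ℝ)) :=
    fun k hk => hgmem.mono' (bKernel_measurable G hGmeas k).aestronglyMeasurable
      (Filter.Eventually.of_forall fun p => norm_bKernel_le G hk p)
  refine ⟨hmem, fun k => if h : 0 ≤ k.im then ((hmem k h).toLp _) else 0, fun k hk => ?_, ?_⟩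
  · simp only [hk, dif_pos]
    exact MemLp.coeFn_toLp _
  · intro k₀ hk₀
    simp only [Set.mem_setOf_eq] at hk₀
    rw [ContinuousWithinAt, tendsto_iff_edist_tendsto_0]
    -- convergence of the squared L² norms
    have hΦ : Filter.Tendsto
        (fun k => ∫⁻ p, (‖bKernel G k p - bKernel G k₀ p‖₊ : ℝ≥0∞) ^ (2:ℕ) ∂volume)
        (nhdsWithin k₀ {k : ℂ | 0 ≤ k.im}) (nhds 0) := by
      have h0 : (0:ℝ≥0∞) = ∫⁻ p : ℝ × ℝ, (0:ℝ≥0∞) ∂volume := by simp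
      rw [h0]
      apply tendsto_lintegral_filter_of_dominated_convergence
        (fun p => ENNReal.ofReal ((2 * gfun G p)^2))
      · filter_upwards with k
        exact ((bKernel_measurable G hGmeas k).sub
          (bKernel_measurable G hGmeas k₀)).enorm.pow_const 2
      · filter_upwards [self_mem_nhdsWithin] with k hk
        filter_upwards with p
        have hb : ‖bKernel G k p - bKernel G k₀ p‖ ≤ 2 * gfun G p := by
          calc ‖bKernel G k p - bKernel G k₀ p‖
              ≤ ‖bKernel G k p‖ + ‖bKernel G k₀ p‖ := norm_sub_le _ _
            _ ≤ gfun G p + gfun G p := add_le_add (norm_bKernel_le G hk p)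
                (norm_bKernel_le G hk₀ p)
            _ = 2 * gfun G p := by ring
        have hgnn : (0:ℝ) ≤ gfun G p := (norm_nonneg _).trans (norm_bKernel_le G hk p)
        calc (‖bKernel G k p - bKernel G k₀ p‖₊ : ℝ≥0∞) ^ (2:ℕ)
            = ENNReal.ofReal (‖bKernel G k p - bKernel G k₀ p‖) ^ (2:ℕ) := by
              rw [ofReal_norm]; rfl
          _ ≤ ENNReal.ofReal (2 * gfun G p) ^ (2:ℕ) := by
              gcongr

          _ = ENNReal.ofReal ((2 * gfun G p)^2) := by
              rw [← ENNReal.ofReal_pow (by linarith)]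
      · -- finiteness of the bound integral
        have h4 : Integrable (fun p : ℝ × ℝ => (2 * gfun G p)^2) volume := by
          have := hgsq.const_mul 4
          apply this.congr
          filter_upwards with p
          ring
        exact h4.lintegral_lt_top.ne
      · filter_upwards with p
        have hcont : Filter.Tendsto (fun k => bKernel G k p) (nhds k₀)
            (nhds (bKernel G k₀ p)) := by
          have : ContinuousAt (fun k => bKernel G k p) k₀ := by
            simp only [funext fun k => bKernel_eq G k p]
            exact (continuousAt_const.mul (hAux_continuousAt _ k₀)).mul continuousAt_const
          exact this
        have h5 : Filter.Tendsto (fun k => (‖bKernel G k p - bKernel G k₀ p‖₊ : ℝ≥0∞))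
            (nhds k₀) (nhds 0) := by
          have h := (hcont.sub (tendsto_const_nhds (x := bKernel G k₀ p))).nnnorm
          rw [sub_self] at h
          simpa using ENNReal.tendsto_coe.mpr h
        have h6 := (ENNReal.Tendsto.pow (n := 2) h5)
        simp only [zero_pow, ne_eq, OfNat.ofNat_ne_zero, not_false_eq_true] at h6
        exact h6.mono_left nhdsWithin_le_nhds
    -- from squared norms to edist in Lp
    have hE : Filter.Tendsto
        (fun k => eLpNorm (bKernel G k - bKernel G k₀) 2 volume)
        (nhdsWithin k₀ {k : ℂ | 0 ≤ k.im}) (nhds 0) := by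
      have heq : ∀ k : ℂ, eLpNorm (bKernel G k - bKernel G k₀) 2 volume
          = (∫⁻ p, (‖bKernel G k p - bKernel G k₀ p‖₊ : ℝ≥0∞) ^ (2:ℕ) ∂volume) ^ (1/2:ℝ) := by
        intro k
        rw [eLpNorm_eq_lintegral_rpow_enorm_toReal (by norm_num) (by norm_num)]
        norm_num
        rfl
      simp only [heq]
      have hc : Filter.Tendsto (fun x : ℝ≥0∞ => x ^ (1/2:ℝ)) (nhds 0) (nhds 0) := by
        have := ENNReal.continuous_rpow_const (y := (1/2:ℝ))
        have h := this.tendsto 0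
        simpa [ENNReal.zero_rpow_of_pos] using h
      exact hc.comp hΦ
    apply Filter.Tendsto.congr' _ hE
    filter_upwards [self_mem_nhdsWithin] with k hk
    rw [dif_pos hk, dif_pos hk₀, Lp.edist_toLp_toLp]
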